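/- Let G be a directed graph and let S be a strongly connected component of G. Let P be a subgraph of G with a distinguished vertex set ∂P such that every edge of G with one endpoint in V(P)\∂P has both endpoints in V(P) (i.e., V(P)\∂P has no edges leaving P). If S ∩ ∂P ≠ ∅, then the set of vertices v ∈ V(P) such that v lies on a directed path within P connecting two elements of S ∩ ∂P equals S ∩ V(P). -/

import Mathlib

private lemma epE {V : Type*} {E EP : V → V → Prop} {VP : Set V}
    (hEP : ∀ u v, EP u v → E u v ∧ u ∈ VP ∧ v ∈ VP) {a b : V}
    (h : Relation.ReflTransGen EP a b) : Relation.ReflTransGen E a b :=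
  Relation.ReflTransGen.mono (fun u v h => (hEP u v h).1) _ _ h

private lemma lastB {V : Type*} {E EP : V → V → Prop} {VP bP : Set V}
    (hEP : ∀ u v, EP u v → E u v ∧ u ∈ VP ∧ v ∈ VP)
    (hclosed : ∀ u v, E u v → (u ∈ VP \ bP ∨ v ∈ VP \ bP) → EP u v)
    {u v : V} (h : Relation.ReflTransGen E u v) (hv : v ∈ VP) :
    ∃ a, Relation.ReflTransGen E u a ∧ Relation.ReflTransGen EP a v ∧ (a ∈ bP ∨ a = u) := by
  induction h with
  | refl =>
    by_cases hb : u ∈ bP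
    · exact ⟨u, .refl, .refl, Or.inl hb⟩
    · exact ⟨u, .refl, .refl, Or.inr rfl⟩
  | tail hp he ih =>
    rename_i w x
    by_cases hb : x ∈ bP
    · exact ⟨x, hp.tail he, .refl, Or.inl hb⟩
    · have hep : EP w x := hclosed _ _ he (Or.inr ⟨hv, hb⟩)
      obtain ⟨a, h1, h2, h3⟩ := ih (hEP _ _ hep).2.1
      exact ⟨a, h1, h2.tail hep, h3⟩

private lemma firstB {V : Type*} {E EP : V → V → Prop} {VP bP : Set V}
    (hEP : ∀ u v, EP u v → E u v ∧ u ∈ VP ∧ v ∈ VP)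
    (hclosed : ∀ u v, E u v → (u ∈ VP \ bP ∨ v ∈ VP \ bP) → EP u v)
    {u v : V} (h : Relation.ReflTransGen E u v) (hu : u ∈ VP) :
    ∃ b, Relation.ReflTransGen EP u b ∧ Relation.ReflTransGen E b v ∧ (b ∈ bP ∨ b = v) := by
  induction h using Relation.ReflTransGen.head_induction_on with
  | refl =>
    by_cases hb : v ∈ bP
    · exact ⟨v, .refl, .refl, Or.inl hb⟩
    · exact ⟨v, .refl, .refl, Or.inr rfl⟩
  | head he hp ih =>
    rename_i w x
    by_cases hb : w ∈ bP
    · exact ⟨w, .refl, .head he hp, Or.inl hb⟩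
    · have hep : EP w x := hclosed _ _ he (Or.inl ⟨hu, hb⟩)
      obtain ⟨b, h1, h2, h3⟩ := ih (hEP _ _ hep).2.2
      exact ⟨b, .head hep h1, h2, h3⟩

/-- If `S` is an SCC of `G` (edge relation `E`) and `P` is a piece
(edges `EP`, vertices `VP`, boundary `bP`) such that every edge of `G` touching
`VP \ bP` is an edge of `P`, and `S ∩ bP ≠ ∅`, then the path net
`Π_P(S ∩ bP)` equals `S ∩ VP`. -/
theorem stmt0 {V : Type*} (E EP : V → V → Prop) (VP bP : Set V)
    (hbP : bP ⊆ VP)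
    (hEP : ∀ u v, EP u v → E u v ∧ u ∈ VP ∧ v ∈ VP)
    (hclosed : ∀ u v, E u v → (u ∈ VP \ bP ∨ v ∈ VP \ bP) → EP u v)
    (S : Set V)
    (hS : ∃ r, S = {w | Relation.ReflTransGen E r w ∧ Relation.ReflTransGen E w r})
    (hne : (S ∩ bP).Nonempty) :
    {v | v ∈ VP ∧ (∃ a ∈ S ∩ bP, Relation.ReflTransGen EP a v) ∧
        (∃ b ∈ S ∩ bP, Relation.ReflTransGen EP v b)} = S ∩ VP := by
  obtain ⟨r, rfl⟩ := hS
  ext v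
  constructor
  · rintro ⟨hvP, ⟨a, ⟨⟨hra, har⟩, -⟩, hav⟩, ⟨b, ⟨⟨hrb, hbr⟩, -⟩, hvb⟩⟩
    exact ⟨⟨hra.trans (epE hEP hav), (epE hEP hvb).trans hbr⟩, hvP⟩
  · rintro ⟨⟨hrv, hvr⟩, hvP⟩
    obtain ⟨x, ⟨⟨hrx, hxr⟩, hxb⟩⟩ := hne
    refine ⟨hvP, ?_, ?_⟩
    · obtain ⟨a, h1, h2, h3⟩ := lastB hEP hclosed (hxr.trans hrv) hvP
      have haB : a ∈ bP := h3.elim id (fun h => h ▸ hxb)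
      exact ⟨a, ⟨⟨hrx.trans h1, (epE hEP h2).trans hvr⟩, haB⟩, h2⟩
    · obtain ⟨b, h1, h2, h3⟩ := firstB hEP hclosed (hvr.trans hrx) hvP
      have hbB : b ∈ bP := h3.elim id (fun h => h ▸ hxb)
      exact ⟨b, ⟨⟨hrv.trans (epE hEP h1), h2.trans hxr⟩, hbB⟩, h1⟩
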